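/- arXiv:1206.3563 — 7 statements merged into one kernel-verified Lean document; each statement's English description precedes it below -/
import Mathlib

section
/- Let F be a Riemannian map from a Riemannian manifold (M₁,g₁) to a Riemannian manifold (M₂,g₂). Then for all horizontal vector fields X, Y, Z (i.e., sections of (ker F_*)^⊥), the second fundamental form satisfies g₂((∇F_*)(X,Y), F_*(Z)) = 0; equivalently, (∇F_*)(X,Y) takes values in (range F_*)^⊥. -/
/-- Lemma 2.1: for a Riemannian map `F : (M₁,g₁) → (M₂,g₂)`, the second
fundamental form `(∇F_*)(X,Y) = ∇^F_X F_*Y − F_*(∇^{M₁}_X Y)` satisfies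
`g₂((∇F_*)(X,Y), F_*Z) = 0` for all horizontal `X, Y, Z`; i.e. `(∇F_*)(X,Y)` takes values
in `(range F_*)^⊥`.

The geometric situation is modelled algebraically: `VF₁` is the module of vector fields on
`M₁`, `VF₂` that of sections of `F⁻¹TM₂`, `C` the ring of smooth functions on `M₁` with
`D X` the derivation by the vector field `X`, `g₁, g₂` the (symmetric, bilinear) metrics,
`nab1` the Levi-Civita connection of `g₁` (metric-compatible), `nabF` the pullback
connection (metric-compatible for `g₂`), `Hor = Γ((ker F_*)^⊥)`, and `Fstar = F_*`; the
Riemannian-map property is `g₂(F_*X, F_*Z) = g₁(X, Z)` whenever `Z` is horizontal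
(for vertical components of `X` both sides vanish), and the second fundamental form is
symmetric. -/
theorem sff_range_perp
    {C : Type*} [CommRing C]
    {VF₁ VF₂ : Type*} [AddCommGroup VF₁] [Module ℝ VF₁] [AddCommGroup VF₂] [Module ℝ VF₂]
    (g₁ : VF₁ → VF₁ → C) (g₂ : VF₂ → VF₂ → C)
    (Fstar : VF₁ →ₗ[ℝ] VF₂)
    (D : VF₁ → C → C)
    (nab1 : VF₁ → VF₁ → VF₁) (nabF : VF₁ → VF₂ → VF₂)
    (Hor : Submodule ℝ VF₁)
    (hg₁symm : ∀ x y, g₁ x y = g₁ y x)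
    (hg₂symm : ∀ s t, g₂ s t = g₂ t s)
    (hg₂addl : ∀ s t u, g₂ (s + t) u = g₂ s u + g₂ t u)
    (hg₂negl : ∀ s u, g₂ (-s) u = -g₂ s u)
    (hg₂subl : ∀ s t u, g₂ (s - t) u = g₂ s u - g₂ t u)
    -- the Riemannian-map property of `F`
    (hriem : ∀ x : VF₁, ∀ z ∈ Hor, g₂ (Fstar x) (Fstar z) = g₁ x z)
    -- metric compatibility of the Levi-Civita connection of `M₁`
    (hcomp1 : ∀ x y z, D x (g₁ y z) = g₁ (nab1 x y) z + g₁ y (nab1 x z))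
    -- metric compatibility of the pullback connection
    (hcompF : ∀ x s t, D x (g₂ s t) = g₂ (nabF x s) t + g₂ s (nabF x t))
    -- symmetry of the second fundamental form of `F`
    (hsffsymm : ∀ x y, nabF x (Fstar y) - Fstar (nab1 x y)
        = nabF y (Fstar x) - Fstar (nab1 y x)) :
    ∀ x ∈ Hor, ∀ y ∈ Hor, ∀ z ∈ Hor,
      g₂ (nabF x (Fstar y) - Fstar (nab1 x y)) (Fstar z) = 0 := by

  intro x hx y hy z hz
  set S : VF₁ → VF₁ → VF₁ → C :=
    fun a b c => g₂ (nabF a (Fstar b) - Fstar (nab1 a b)) (Fstar c) with hS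
  -- antisymmetry in the last two arguments
  have key : ∀ a : VF₁, ∀ b ∈ Hor, ∀ c ∈ Hor, S a b c + S a c b = 0 := by
    intro a b hb c hc
    have E1 := hcompF a (Fstar b) (Fstar c)
    have E2 := hcomp1 a b c
    have E3 : D a (g₂ (Fstar b) (Fstar c)) = D a (g₁ b c) := by rw [hriem b c hc]
    have E4 := hg₂subl (nabF a (Fstar b)) (Fstar (nab1 a b)) (Fstar c)
    have E5 := hg₂subl (nabF a (Fstar c)) (Fstar (nab1 a c)) (Fstar b)
    have E6 := hg₂symm (Fstar b) (nabF a (Fstar c))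
    have E7 := hriem (nab1 a b) c hc
    have E8 := hriem (nab1 a c) b hb
    have E9 := hg₁symm (nab1 a c) b
    simp only [hS]
    linear_combination E4 + E5 - E1 + E3 + E2 - E6 - E7 - E8 - E9
  -- symmetry in the first two arguments
  have σ1 : S x z y = S z x y := by simp only [hS]; rw [hsffsymm]
  have σ2 : S z y x = S y z x := by simp only [hS]; rw [hsffsymm]
  have σ3 : S y x z = S x y z := by simp only [hS]; rw [hsffsymm]
  have two : ∀ c ∈ Hor, S x y c + S x y c = 0 := by
    intro c hc
    have σ1 : S x c y = S c x y := by simp only [hS]; rw [hsffsymm]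
    have σ2 : S c y x = S y c x := by simp only [hS]; rw [hsffsymm]
    have σ3 : S y x c = S x y c := by simp only [hS]; rw [hsffsymm]
    have K1 := key x y hy c hc
    have K2 := key c x hx y hy
    have K3 := key y c hc x hx
    linear_combination K1 - K2 + K3 - σ1 + σ2 - σ3
  -- kill the 2-torsion using divisibility
  have h : VF₁ := (1/2 : ℝ) • z
  have hh : ((1/2 : ℝ) • z) ∈ Hor := Hor.smul_mem _ hz
  have hzz : Fstar z = Fstar ((1/2 : ℝ) • z) + Fstar ((1/2 : ℝ) • z) := by
    rw [← map_add]
    congr 1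
    rw [← add_smul]
    norm_num
  show S x y z = 0
  calc S x y z
      = g₂ (Fstar ((1/2:ℝ)•z) + Fstar ((1/2:ℝ)•z)) (nabF x (Fstar y) - Fstar (nab1 x y)) := by
        simp only [hS]; rw [hzz, hg₂symm]
    _ = S x y ((1/2:ℝ)•z) + S x y ((1/2:ℝ)•z) := by
        rw [hg₂addl]; simp only [hS]; rw [hg₂symm]
    _ = 0 := two _ hh
end

section
/- Let F be a Riemannian map from an almost Hermitian manifold (M₁,g₁,J) to a Riemannian manifold (M₂,g₂), and for X ∈ ker F_* write JX = φX + ωX with φX the component in ker F_* and ωX the orthogonal component. Then F is a slant Riemannian map (the angle θ(X) between JX and ker F_* is constant) if and only if there exists a constant λ ∈ [−1,0] such that φ²X = λX for all X ∈ Γ(ker F_*); in that case λ = −cos²θ where θ is the slant angle. -/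
open scoped RealInnerProductSpace

/-- Theorem 3.1: for a Riemannian map `F` from an almost Hermitian space
(here modelled pointwise by its differential, a linear map whose restriction to
`(ker F)ᗮ` is an isometry) with `φ x = P_{ker F}(J x)` for vertical `x`, `F` is slant
(the angle `θ(x)` between `J x` and `ker F` is a constant) iff there is `λ ∈ [−1,0]`
with `φ² = λ·Id` on `ker F`; and if `F` is slant with angle `θ` then `λ = −cos²θ`. -/
theorem slant_riemannian_map_characterization
    {V₁ V₂ : Type*} [NormedAddCommGroup V₁] [InnerProductSpace ℝ V₁] [FiniteDimensional ℝ V₁]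
    [NormedAddCommGroup V₂] [InnerProductSpace ℝ V₂] [FiniteDimensional ℝ V₂]
    (F : V₁ →ₗ[ℝ] V₂)
    (hriem : ∀ x ∈ (LinearMap.ker F)ᗮ, ∀ y ∈ (LinearMap.ker F)ᗮ, ⟪F x, F y⟫ = ⟪x, y⟫)
    (J : V₁ →ₗ[ℝ] V₁)
    (hJ2 : ∀ x : V₁, J (J x) = -x)
    (hJiso : ∀ x y : V₁, ⟪J x, J y⟫ = ⟪x, y⟫)
    (φ : V₁ → V₁)
    (hφ : ∀ x : V₁, φ x = ((Submodule.orthogonalProjectionOnto (LinearMap.ker F) (J x) : LinearMap.ker F) : V₁)) :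
    ((∃ θ : ℝ, ∀ x ∈ LinearMap.ker F, x ≠ 0 →
        Real.arccos (‖φ x‖ / ‖J x‖) = θ) ↔
      (∃ lam ∈ Set.Icc (-1 : ℝ) 0, ∀ x ∈ LinearMap.ker F, φ (φ x) = lam • x)) ∧
    (∀ θ : ℝ, (∀ x ∈ LinearMap.ker F, x ≠ 0 → Real.arccos (‖φ x‖ / ‖J x‖) = θ) →
      ∀ x ∈ LinearMap.ker F, φ (φ x) = -(Real.cos θ) ^ 2 • x) := by
  set K := LinearMap.ker F with hKdef
  have hφmem : ∀ x, φ x ∈ K := fun x => by rw [hφ]; exact Submodule.coe_mem _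
  have hφinner : ∀ x y, y ∈ K → ⟪φ x, y⟫ = ⟪J x, y⟫ := by
    intro x y hy
    have h0 : ⟪J x - (K.orthogonalProjectionOnto (J x) : V₁), y⟫ = 0 :=
      Submodule.starProjection_inner_eq_zero (K := K) (J x) y hy
    rw [inner_sub_left] at h0
    rw [hφ x]
    linarith
  have hφadd : ∀ x y, φ (x + y) = φ x + φ y := by
    intro x y; simp [hφ, map_add]
  have hφzero : φ 0 = 0 := by simp [hφ]
  have hnormJ : ∀ x, ‖J x‖ = ‖x‖ := by
    intro x
    have h2 : ‖J x‖ ^ 2 = ‖x‖ ^ 2 := by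
      rw [← real_inner_self_eq_norm_sq, ← real_inner_self_eq_norm_sq]
      exact hJiso x x
    calc ‖J x‖ = Real.sqrt (‖J x‖ ^ 2) := (Real.sqrt_sq (norm_nonneg _)).symm
      _ = Real.sqrt (‖x‖ ^ 2) := by rw [h2]
      _ = ‖x‖ := Real.sqrt_sq (norm_nonneg _)
  have hskew : ∀ x y, ⟪J x, y⟫ = -⟪x, J y⟫ := by
    intro x y
    have h := hJiso x (J y)
    rw [hJ2, inner_neg_right] at h
    linarith
  have hφle : ∀ x, ‖φ x‖ ≤ ‖x‖ := by
    intro x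
    have h0 : ⟪J x - φ x, φ x⟫ = 0 := by
      rw [hφ x]; exact Submodule.starProjection_inner_eq_zero (K := K) (J x) _ (Submodule.coe_mem _)
    have hpyth : ‖J x‖ ^ 2 = ‖J x - φ x‖ ^ 2 + ‖φ x‖ ^ 2 := by
      have h1 := norm_add_sq_real (J x - φ x) (φ x)
      rw [h0, sub_add_cancel] at h1
      linarith
    have hJx := hnormJ x
    nlinarith [norm_nonneg (φ x), norm_nonneg x, sq_nonneg (‖J x - φ x‖)]
  have hkey : ∀ x y, y ∈ K → ⟪φ (φ x), y⟫ = -⟪φ x, φ y⟫ := by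
    intro x y hy
    rw [hφinner (φ x) y hy, hskew]
    have h2 : ⟪J y, φ x⟫ = ⟪φ y, φ x⟫ := (hφinner y (φ x) (hφmem x)).symm
    have h3 := real_inner_comm (φ x) (J y)
    have h4 := real_inner_comm (φ x) (φ y)
    linarith
  have main : ∀ θ : ℝ, (∀ x ∈ K, x ≠ 0 → Real.arccos (‖φ x‖ / ‖J x‖) = θ) →
      ∀ x ∈ K, φ (φ x) = -(Real.cos θ) ^ 2 • x := by
    intro θ hθ x hx
    set c := Real.cos θ with hc
    have hnorm : ∀ y, y ∈ K → ‖φ y‖ = c * ‖y‖ := by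
      intro y hy
      by_cases hy0 : y = 0
      · simp [hy0, hφzero]
      · have hJy : ‖J y‖ ≠ 0 := by
          rw [hnormJ]; exact norm_ne_zero_iff.mpr hy0
        have hr0 : (0 : ℝ) ≤ ‖φ y‖ / ‖J y‖ := by positivity
        have hr1 : ‖φ y‖ / ‖J y‖ ≤ 1 := by
          rw [div_le_one (lt_of_le_of_ne (norm_nonneg _) (Ne.symm hJy))]
          rw [hnormJ]; exact hφle y
        have hθy := hθ y hy hy0
        have hcc : c = ‖φ y‖ / ‖J y‖ := by
          rw [hc, ← hθy, Real.cos_arccos (by linarith) hr1]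
        rw [← hnormJ y, hcc]
        exact (div_mul_cancel₀ _ hJy).symm
    have hinner : ∀ y, y ∈ K → ∀ z, z ∈ K → ⟪φ y, φ z⟫ = c ^ 2 * ⟪y, z⟫ := by
      intro y hy z hz
      have h1 := norm_add_sq_real (φ y) (φ z)
      rw [← hφadd, hnorm _ (K.add_mem hy hz), hnorm _ hy, hnorm _ hz] at h1
      have h2 := norm_add_sq_real y z
      linear_combination c ^ 2 * h2 / 2 - h1 / 2
    have hw : ∀ y, y ∈ K → ⟪φ (φ x) + c ^ 2 • x, y⟫ = 0 := by
      intro y hy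
      rw [inner_add_left, hkey x y hy, real_inner_smul_left, hinner x hx y hy]
      ring
    have hwK : φ (φ x) + c ^ 2 • x ∈ K := K.add_mem (hφmem _) (K.smul_mem _ hx)
    have h0 := hw _ hwK
    rw [inner_self_eq_zero] at h0
    have h1 : φ (φ x) = -(c ^ 2 • x) := eq_neg_of_add_eq_zero_left h0
    rw [h1, neg_smul]
  refine ⟨⟨?_, ?_⟩, main⟩
  · rintro ⟨θ, hθ⟩
    refine ⟨-(Real.cos θ) ^ 2, ⟨?_, ?_⟩, main θ hθ⟩
    · nlinarith [Real.neg_one_le_cos θ, Real.cos_le_one θ]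
    · nlinarith [sq_nonneg (Real.cos θ)]
  · rintro ⟨lam, ⟨hl1, hl2⟩, hlam⟩
    refine ⟨Real.arccos (Real.sqrt (-lam)), ?_⟩
    intro x hx hx0
    have hphisq : ‖φ x‖ ^ 2 = -lam * ‖x‖ ^ 2 := by
      have h1 := hkey x x hx
      rw [hlam x hx, real_inner_smul_left, real_inner_self_eq_norm_sq,
        real_inner_self_eq_norm_sq] at h1
      linarith
    have hx' : ‖x‖ ≠ 0 := norm_ne_zero_iff.mpr hx0
    have hr : ‖φ x‖ / ‖J x‖ = Real.sqrt (-lam) := by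
      rw [hnormJ]
      have hsq : (‖φ x‖ / ‖x‖) ^ 2 = -lam := by
        rw [div_pow, hphisq]
        field_simp
      rw [← hsq]
      exact (Real.sqrt_sq (by positivity)).symm
    rw [hr]
end

section
/- Let V be a real inner product space with a compatible complex structure J (J² = −Id, ⟨JX,JY⟩ = ⟨X,Y⟩), and let W ⊂ V be a subspace with orthogonal projection P onto W. Define φ: W → W by φX = P(JX). If there is λ ∈ [−1,0] with φ² = λ·Id_W, then for every nonzero X ∈ W the angle θ(X) between JX and W satisfies cos²θ(X) = −λ; in particular the angle is constant on W. -/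
open scoped RealInnerProductSpace

/-- pointwise slant characterization, direction "φ² = λ·Id ⇒ constant angle
with cos²θ = −λ". The angle between `J x` and `W` is `arccos (‖P(Jx)‖ / ‖Jx‖)`. -/
theorem slant_angle_of_phi_sq_eq_smul
    {V : Type*} [NormedAddCommGroup V] [InnerProductSpace ℝ V] [FiniteDimensional ℝ V]
    (J : V →ₗ[ℝ] V)
    (hJ2 : ∀ x : V, J (J x) = -x)
    (hJiso : ∀ x y : V, ⟪J x, J y⟫ = ⟪x, y⟫)
    (W : Submodule ℝ V)
    (φ : V → V)
    (hφ : ∀ x : V, φ x = ((W.orthogonalProjectionOnto (J x) : W) : V))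
    (lam : ℝ) (hlam : lam ∈ Set.Icc (-1 : ℝ) 0)
    (hφ2 : ∀ x ∈ W, φ (φ x) = lam • x) :
    ∀ x ∈ W, x ≠ 0 →
      (Real.cos (Real.arccos
        (‖((W.orthogonalProjectionOnto (J x) : W) : V)‖ / ‖J x‖))) ^ 2 = -lam := by
  intro x hxW hx0
  set p : V := ((W.orthogonalProjectionOnto (J x) : W) : V) with hp
  have hpW : p ∈ W := (W.orthogonalProjectionOnto (J x)).2
  have hnx : 0 < ‖x‖ := norm_pos_iff.mpr hx0
  -- ‖J x‖ = ‖x‖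
  have hJsq : ‖J x‖ ^ 2 = ‖x‖ ^ 2 := by
    rw [← real_inner_self_eq_norm_sq, ← real_inner_self_eq_norm_sq, hJiso]
  have hJnorm : ‖J x‖ = ‖x‖ := by
    nlinarith [norm_nonneg (J x), norm_nonneg x]
  -- key inner product computations
  have h1 : ⟪p, p⟫ = ⟪J x, p⟫ := by
    have : ⟪J x - p, p⟫ = 0 := W.starProjection_inner_eq_zero (J x) p hpW
    have h := sub_eq_zero.mpr (rfl : ⟪J x - p, p⟫ = ⟪J x - p, p⟫)
    rw [inner_sub_left] at this
    linarith
  have h2 : ⟪J x, p⟫ = -⟪x, J p⟫ := by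
    have := hJiso (J x) p
    rw [hJ2 x, inner_neg_left] at this
    linarith
  have h3 : ⟪x, J p⟫ = lam * ‖x‖ ^ 2 := by
    have horth : ⟪J p - ((W.orthogonalProjectionOnto (J p) : W) : V), x⟫ = 0 :=
      W.starProjection_inner_eq_zero (J p) x hxW
    rw [inner_sub_left] at horth
    have hφp : ((W.orthogonalProjectionOnto (J p) : W) : V) = lam • x := by
      have := hφ2 x hxW
      rw [hφ x, ← hp, hφ p] at this
      exact this
    have : ⟪J p, x⟫ = ⟪(lam • x : V), x⟫ := by rw [← hφp]; linarith
    rw [real_inner_smul_left, real_inner_self_eq_norm_sq] at this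
    rw [real_inner_comm]
    exact this
  have hpsq : ‖p‖ ^ 2 = -lam * ‖x‖ ^ 2 := by
    rw [← real_inner_self_eq_norm_sq]; rw [h1, h2, h3]; ring
  -- the ratio is in [-1, 1]
  have ht0 : 0 ≤ ‖p‖ / ‖J x‖ := div_nonneg (norm_nonneg _) (norm_nonneg _)
  have htsq : (‖p‖ / ‖J x‖) ^ 2 = -lam := by
    rw [div_pow, hJsq, hpsq, mul_div_assoc, div_self (by positivity), mul_one]
  have ht1 : ‖p‖ / ‖J x‖ ≤ 1 := by
    nlinarith [hlam.1, hlam.2]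
  rw [Real.cos_arccos (by linarith) ht1]
  exact htsq
end

section
/- Let V be a real inner product space with a compatible complex structure J, W ⊂ V a subspace, P the orthogonal projection onto W, and φ = P∘J restricted to W. If for every nonzero X ∈ W the angle θ(X) between JX and W equals a fixed constant θ, then φ²X = −cos²θ · X for all X ∈ W. -/
open scoped RealInnerProductSpace

/-- if the angle between `J x` and `W` is a constant `θ` for every nonzero
`x ∈ W`, then `φ² = −cos²θ · Id` on `W`, where `φ = P ∘ J` and `P` is the orthogonal
projection onto `W`. -/
theorem phi_sq_eq_neg_cos_sq_of_constant_angle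
    {V : Type*} [NormedAddCommGroup V] [InnerProductSpace ℝ V] [FiniteDimensional ℝ V]
    (J : V →ₗ[ℝ] V)
    (hJ2 : ∀ x : V, J (J x) = -x)
    (hJiso : ∀ x y : V, ⟪J x, J y⟫ = ⟪x, y⟫)
    (W : Submodule ℝ V)
    (φ : V → V)
    (hφ : ∀ x : V, φ x = ((W.orthogonalProjection (J x) : W) : V))
    (θ : ℝ)
    (hangle : ∀ x ∈ W, x ≠ 0 →
      Real.arccos (‖((W.orthogonalProjection (J x) : W) : V)‖ / ‖J x‖) = θ) :
    ∀ x ∈ W, φ (φ x) = -(Real.cos θ) ^ 2 • x := by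
  intro x hx
  set c := Real.cos θ with hc
  have hφmem : ∀ u : V, φ u ∈ W := fun u => by
    rw [hφ]; exact (W.orthogonalProjection (J u)).2
  have hPinner : ∀ (u : V), ∀ y ∈ W, ⟪((W.orthogonalProjection u : W) : V), y⟫ = ⟪u, y⟫ := by
    intro u y hy
    have h : ⟪u - ((W.orthogonalProjection u : W) : V), y⟫ = 0 := W.starProjection_inner_eq_zero u y hy
    rw [inner_sub_left] at h
    linarith
  have hφinner : ∀ (u : V), ∀ y ∈ W, ⟪φ u, y⟫ = ⟪J u, y⟫ := by
    intro u y hy; rw [hφ]; exact hPinner _ y hy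
  have hJskew : ∀ u y : V, ⟪J u, y⟫ = -⟪u, J y⟫ := by
    intro u y
    have h := hJiso u (J y)
    rw [hJ2 y, inner_neg_right] at h
    linarith
  have hJnorm : ∀ u : V, ‖J u‖ = ‖u‖ := by
    intro u
    have h : ‖J u‖ ^ 2 = ‖u‖ ^ 2 := by
      rw [← real_inner_self_eq_norm_sq, ← real_inner_self_eq_norm_sq, hJiso]
    nlinarith [norm_nonneg (J u), norm_nonneg u]
  have hPle : ∀ u : V, ‖((W.orthogonalProjection u : W) : V)‖ ≤ ‖u‖ := by
    intro u
    have h : ⟪u - ((W.orthogonalProjection u : W) : V), ((W.orthogonalProjection u : W) : V)⟫ = 0 := W.starProjection_inner_eq_zero u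
      ((W.orthogonalProjection u : W) : V) (W.orthogonalProjection u).2
    rw [inner_sub_left] at h
    have h2 : ‖((W.orthogonalProjection u : W) : V)‖ ^ 2 ≤ ‖u‖ * ‖((W.orthogonalProjection u : W) : V)‖ := by
      have hcs := real_inner_le_norm u ((W.orthogonalProjection u : W) : V)
      rw [← real_inner_self_eq_norm_sq]
      linarith
    nlinarith [norm_nonneg ((W.orthogonalProjection u : W) : V), norm_nonneg u]
  -- norm identity
  have hnorm : ∀ y ∈ W, ‖φ y‖ = c * ‖y‖ := by
    intro y hy
    rcases eq_or_ne y 0 with rfl | hy0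
    · simp [hφ]
    · have hJn : ‖J y‖ = ‖y‖ := hJnorm y
      have hpos : (0:ℝ) < ‖J y‖ := by rw [hJn]; exact norm_pos_iff.mpr hy0
      have hrle : ‖((W.orthogonalProjection (J y) : W) : V)‖ / ‖J y‖ ≤ 1 :=
        (div_le_one hpos).mpr (hPle (J y))
      have hrge : (-1:ℝ) ≤ ‖((W.orthogonalProjection (J y) : W) : V)‖ / ‖J y‖ := by
        have := div_nonneg (norm_nonneg ((W.orthogonalProjection (J y) : W) : V)) hpos.le
        linarith
      have hcos : c = ‖((W.orthogonalProjection (J y) : W) : V)‖ / ‖J y‖ := by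
        rw [hc, ← hangle y hy hy0, Real.cos_arccos hrge hrle]
      rw [hφ, hcos, hJn, div_mul_cancel₀ _ (norm_ne_zero_iff.mpr hy0)]
  have hsq : ∀ y ∈ W, ⟪φ y, φ y⟫ = c ^ 2 * ⟪y, y⟫ := by
    intro y hy
    rw [real_inner_self_eq_norm_sq, real_inner_self_eq_norm_sq, hnorm y hy]
    ring
  have hφadd : ∀ u v : V, φ (u + v) = φ u + φ v := by
    intro u v
    simp [hφ, map_add]
  have hpolar : ∀ y ∈ W, ∀ z ∈ W, ⟪φ y, φ z⟫ = c ^ 2 * ⟪y, z⟫ := by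
    intro y hy z hz
    have h1 := hsq (y + z) (W.add_mem hy hz)
    have h2 := hsq y hy
    have h3 := hsq z hz
    rw [hφadd] at h1
    rw [inner_add_add_self, inner_add_add_self] at h1
    rw [real_inner_comm (φ y) (φ z), real_inner_comm y z] at h1
    linarith
  -- key orthogonality
  have key : ∀ y ∈ W, ⟪φ (φ x) + c ^ 2 • x, y⟫ = 0 := by
    intro y hy
    have ha : ⟪φ (φ x), y⟫ = -⟪φ x, J y⟫ := by rw [hφinner _ y hy, hJskew]
    have hb : ⟪φ y, φ x⟫ = ⟪J y, φ x⟫ := hφinner y (φ x) (hφmem x)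
    have h1 : ⟪φ (φ x), y⟫ = -⟪φ x, φ y⟫ := by
      linarith [ha, hb, real_inner_comm (φ x) (J y), real_inner_comm (φ x) (φ y)]
    rw [inner_add_left, inner_smul_left, h1, hpolar x hx y hy]
    simp
  have hz : φ (φ x) + c ^ 2 • x = 0 := by
    have hmem : φ (φ x) + c ^ 2 • x ∈ W := W.add_mem (hφmem _) (W.smul_mem _ hx)
    have := key _ hmem
    exact inner_self_eq_zero.mp this
  have hfin : φ (φ x) = -(c ^ 2 • x) := by
    rw [add_eq_zero_iff_eq_neg] at hz
    exact hz
  rw [neg_smul]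
  exact hfin
end

section
/- Let V be a real inner product space with a compatible complex structure J and W a subspace that is slant with angle θ ∈ (0, π/2], with ω: W → W^⊥ given by ωX = JX − φX. Then the subspace W ⊕ ω(W) of V is invariant under J. -/
open scoped RealInnerProductSpace

/-- for a slant subspace `W` with slant angle `θ ∈ (0, π/2]`, where
`φ x = P_W (J x)` and `ω x = J x − φ x`, the subspace `W ⊕ ω(W)` of `V` is `J`-invariant. -/
theorem slant_W_oplus_omegaW_J_invariant
    {V : Type*} [NormedAddCommGroup V] [InnerProductSpace ℝ V] [FiniteDimensional ℝ V]
    (J : V →ₗ[ℝ] V)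
    (hJ2 : ∀ x : V, J (J x) = -x)
    (hJiso : ∀ x y : V, ⟪J x, J y⟫ = ⟪x, y⟫)
    (W : Submodule ℝ V)
    (φ ω : V → V)
    (hφ : ∀ x : V, φ x = ((W.orthogonalProjectionOnto (J x) : W) : V))
    (hω : ∀ x : V, ω x = J x - φ x)
    (θ : ℝ) (hθ : θ ∈ Set.Ioc 0 (Real.pi / 2))
    (hφ2 : ∀ x ∈ W, φ (φ x) = -(Real.cos θ) ^ 2 • x) :
    ∀ v ∈ W ⊔ Submodule.span ℝ (ω '' (W : Set V)),
      J v ∈ W ⊔ Submodule.span ℝ (ω '' (W : Set V)) := by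
  set U := W ⊔ Submodule.span ℝ (ω '' (W : Set V)) with hU
  have hφmem : ∀ x : V, φ x ∈ W := fun x => by
    rw [hφ]; exact (W.orthogonalProjectionOnto (J x)).2
  have key : W ⊔ Submodule.span ℝ (ω '' (W : Set V)) ≤ U.comap J := by
    apply sup_le
    · intro x hx
      rw [Submodule.mem_comap]
      have hx' : J x = φ x + ω x := by rw [hω]; abel
      rw [hx']
      exact add_mem (Submodule.mem_sup_left (hφmem x))
        (Submodule.mem_sup_right (Submodule.subset_span ⟨x, hx, rfl⟩))
    · rw [Submodule.span_le]
      rintro _ ⟨x, hx, rfl⟩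
      rw [SetLike.mem_coe, Submodule.mem_comap]
      have hcalc : J (ω x) = ((Real.cos θ) ^ 2 - 1) • x - ω (φ x) := by
        rw [hω x, map_sub, hJ2]
        have : J (φ x) = φ (φ x) + ω (φ x) := by rw [hω]; abel
        rw [this, hφ2 x hx, sub_smul, one_smul, neg_smul]
        abel
      rw [hcalc]
      exact sub_mem (Submodule.mem_sup_left (W.smul_mem _ hx))
        (Submodule.mem_sup_right (Submodule.subset_span ⟨φ x, hφmem x, rfl⟩))
  exact fun v hv => key hv
end

section
/- Let F be a Riemannian map between Riemannian manifolds with dim(ker F_*) = m₁ and rank F = m₂. Then the tension field of F satisfies τ(F) = −m₁·F_*(H) + m₂·H₂, where H is the mean curvature vector field of the distribution ker F_* and H₂ is the mean curvature vector field of range F_* (with respect to the second fundamental form of F). -/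
/-- Lemma 2.2: for a Riemannian map `F` with `dim(ker F_*) = m₁` and
`rank F = m₂`, the tension field (the trace of the second fundamental form, computed with
an orthonormal frame `{Uᵢ}` of `ker F_*` and `{Xⱼ}` of `(ker F_*)^⊥`) satisfies
`τ(F) = −m₁ F_*(H) + m₂ H₂`, where `m₁ H = Σᵢ 𝒯_{Uᵢ}Uᵢ = Σᵢ ℋ(∇_{Uᵢ}Uᵢ)` is the mean
curvature of `ker F_*` and `m₂ H₂ = Σⱼ (∇F_*)(Xⱼ,Xⱼ)` the mean curvature of `range F_*`.

Modelled algebraically: `hP` is the horizontal projection (so `Fstar ∘ hP = Fstar`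
since `Fstar` kills vertical fields), `nab1`, `nabF` are the Levi-Civita and pullback
connections, and `(∇F_*)(X,Y) = nabF X (Fstar Y) − Fstar (nab1 X Y)`. -/
theorem tension_field_riemannian_map
    {VF₁ VF₂ : Type*} [AddCommGroup VF₁] [Module ℝ VF₁] [AddCommGroup VF₂] [Module ℝ VF₂]
    (Fstar : VF₁ →ₗ[ℝ] VF₂)
    (nab1 : VF₁ → VF₁ → VF₁) (nabF : VF₁ → VF₂ → VF₂)
    (Vert Hor : Submodule ℝ VF₁)
    (hP : VF₁ →ₗ[ℝ] VF₁)
    (hPrange : ∀ w, hP w ∈ Hor)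
    (hPF : ∀ w, Fstar (hP w) = Fstar w)
    (hker : ∀ v ∈ Vert, Fstar v = 0)
    (hnabF0 : ∀ x : VF₁, nabF x (0 : VF₂) = 0)
    (m₁ m₂ : ℕ) (U : Fin m₁ → VF₁) (Xs : Fin m₂ → VF₁)
    (hU : ∀ i, U i ∈ Vert) (hX : ∀ j, Xs j ∈ Hor)
    (Hmean : VF₁) (H₂ : VF₂)
    (hH : (m₁ : ℝ) • Hmean = ∑ i, hP (nab1 (U i) (U i)))
    (hH₂ : (m₂ : ℝ) • H₂ = ∑ j, (nabF (Xs j) (Fstar (Xs j)) - Fstar (nab1 (Xs j) (Xs j)))) :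
    (∑ i, (nabF (U i) (Fstar (U i)) - Fstar (nab1 (U i) (U i))))
      + (∑ j, (nabF (Xs j) (Fstar (Xs j)) - Fstar (nab1 (Xs j) (Xs j))))
      = -((m₁ : ℝ) • Fstar Hmean) + (m₂ : ℝ) • H₂ := by
  have h1 : (∑ i, (nabF (U i) (Fstar (U i)) - Fstar (nab1 (U i) (U i))))
      = -((m₁ : ℝ) • Fstar Hmean) := by
    have : ∀ i, nabF (U i) (Fstar (U i)) - Fstar (nab1 (U i) (U i))
        = -(Fstar (hP (nab1 (U i) (U i)))) := by
      intro i
      rw [hker (U i) (hU i), hnabF0, hPF]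
      abel
    simp only [this, Finset.sum_neg_distrib, ← map_sum, ← hH, map_smul]
  rw [h1, hH₂]
end

section
/- Let F be a slant Riemannian map with slant angle θ from a Kähler manifold (M₁,g₁,J) to a Riemannian manifold (M₂,g₂). If ω is parallel with respect to the Levi-Civita connection on ker F_* (i.e., (∇_X ω)Y = 0 for all vertical X,Y), then 𝒯_{φX} φX = −cos²θ · 𝒯_X X for every X ∈ Γ(ker F_*). -/
/-- The O'Neill tensor `𝒯_E G = ℋ∇_{𝒱E}𝒱G + 𝒱∇_{𝒱E}ℋG`. -/
def oneillT {VF : Type*} [AddCommGroup VF] [Module ℝ VF]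
    (vP hP : VF →ₗ[ℝ] VF) (nab : VF → VF → VF) (e g : VF) : VF :=
  hP (nab (vP e) (vP g)) + vP (nab (vP e) (hP g))

/-- Lemma 3.1: for a slant Riemannian map with slant angle `θ` from a
Kähler manifold (`∇J = 0`, slant condition `φ² = −cos²θ·id` on vertical fields), if `ω`
is parallel on `ker F_*` (i.e. `(∇_X ω)Y = ℋ∇_X(ωY) − ω(𝒱∇_X Y) = 0` for vertical
`X, Y`), then `𝒯_{φX} φX = −cos²θ · 𝒯_X X` for every vertical `X`.  Here `φ = 𝒱 ∘ J`,
`ω = ℋ ∘ J` on vertical fields, `𝒯` is the (vertically symmetric, since `ker F_*` is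
integrable) O'Neill tensor, and the connection is additive and `ℝ`-homogeneous in its
second argument. -/
theorem T_phiX_phiX_of_omega_parallel
    {VF : Type*} [AddCommGroup VF] [Module ℝ VF]
    (J : VF →ₗ[ℝ] VF) (hJ2 : ∀ w, J (J w) = -w)
    (vP hP : VF →ₗ[ℝ] VF)
    (hsum : ∀ w, vP w + hP w = w)
    (hvv : ∀ w, vP (vP w) = vP w) (hhh : ∀ w, hP (hP w) = hP w)
    (hvh : ∀ w, vP (hP w) = 0) (hhv : ∀ w, hP (vP w) = 0)
    (nab : VF → VF → VF)
    (hnabadd : ∀ x y z, nab x (y + z) = nab x y + nab x z)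
    (hnabsmul : ∀ x (c : ℝ) y, nab x (c • y) = c • nab x y)
    (hkaehler : ∀ x y, nab x (J y) = J (nab x y))
    (θ : ℝ)
    (hslant : ∀ x, vP x = x → vP (J (vP (J x))) = -(Real.cos θ) ^ 2 • x)
    -- `𝒯` is symmetric on vertical fields (since `ker F_*` is integrable)
    (hTsym : ∀ x y, vP x = x → vP y = y →
        oneillT vP hP nab x y = oneillT vP hP nab y x)
    -- `ω` is parallel: `(∇_X ω)Y = 0` for vertical `X, Y`
    (hpar : ∀ x y, vP x = x → vP y = y →
        hP (nab x (hP (J y))) = hP (J (vP (nab x y)))) :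
    ∀ x, vP x = x →
      oneillT vP hP nab (vP (J x)) (vP (J x))
        = -(Real.cos θ) ^ 2 • oneillT vP hP nab x x := by
  intro x hx
  -- basic facts
  have hnab0 : ∀ a, nab a 0 = 0 := by
    intro a
    have := hnabsmul a 0 0
    simpa using this
  have hhz : ∀ a, vP a = a → hP a = 0 := by
    intro a ha
    calc hP a = hP (vP a) := by rw [ha]
      _ = 0 := hhv a
  -- key identity: for vertical a b, hP (nab a (vP (J b))) = hP (J (hP (nab a b)))
  have key : ∀ a b, vP a = a → vP b = b →
      hP (nab a (vP (J b))) = hP (J (hP (nab a b))) := by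
    intro a b ha hb
    have h1 : vP (J b) = J b - hP (J b) := eq_sub_of_add_eq (hsum (J b))
    have h2 : nab a (vP (J b)) = nab a (J b) - nab a (hP (J b)) := by
      have h := hnabadd a (J b - hP (J b)) (hP (J b))
      rw [sub_add_cancel] at h
      rw [h1]
      exact eq_sub_of_add_eq h.symm
    have h3 : hP (nab a (J b)) = hP (J (nab a b)) := by rw [hkaehler]
    have h4 : hP (nab a (hP (J b))) = hP (J (vP (nab a b))) := hpar a b ha hb
    have h5 : hP (nab a b) = nab a b - vP (nab a b) := eq_sub_of_add_eq' (hsum (nab a b))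
    rw [h2, map_sub, h3, h4, h5, map_sub, map_sub]
  -- set φx
  set p := vP (J x) with hp
  have hpv : vP p = p := hvv (J x)
  have hphp : hP p = 0 := hhz p hpv
  have hhx : hP x = 0 := hhz x hx
  -- oneillT on vertical pairs is hP (nab a b)
  have hT : ∀ a b, vP a = a → vP b = b →
      oneillT vP hP nab a b = hP (nab a b) := by
    intro a b ha hb
    unfold oneillT
    rw [ha, hb, hhz b hb, hnab0, map_zero, add_zero]
  have step1 : oneillT vP hP nab p p = hP (J (hP (nab p x))) := by
    rw [hT p p hpv hpv]
    have h := key p x hpv hx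
    rw [← hp] at h
    exact h
  have step2 : hP (nab p x) = hP (nab x p) := by
    have := hTsym p x hpv hx
    rw [hT p x hpv hx, hT x p hx hpv] at this
    exact this
  have step3 : hP (J (hP (nab x p))) = hP (nab x (vP (J p))) :=
    (key x p hx hpv).symm
  have step4 : vP (J p) = -(Real.cos θ) ^ 2 • x := hslant x hx
  calc oneillT vP hP nab p p = hP (J (hP (nab x p))) := by rw [step1, step2]
    _ = hP (nab x (vP (J p))) := step3
    _ = -(Real.cos θ) ^ 2 • hP (nab x x) := by
        rw [step4, hnabsmul, map_smul]
    _ = -(Real.cos θ) ^ 2 • oneillT vP hP nab x x := by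
        rw [hT x x hx hx]
end
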